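/- In the targeted sPCE setup, the contrastive gap admits a Kullback–Leibler representation: for λ-almost every h with 0 < m(h) < ∞, let p̃_h be the probability measure on Θ^{L+1} whose density with respect to the product μ^{⊗(L+1)} at (ϑ^(0), …, ϑ^(L)) is [(1/(L+1)) Σ_{ℓ=0}^L f(ϑ^(ℓ), h)] / m(h). Then E[log p̂_L − log m(h)] = ∫_H KL(p̃_h ‖ μ^{⊗(L+1)}) m(h) dλ(h), where KL denotes Kullback–Leibler divergence; in particular the contrastive gap is nonnegative. -/

import Mathlib

open MeasureTheory ProbabilityTheory
open scoped ENNReal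

lemma pi_lintegral_insertNth {α : Type*} [MeasurableSpace α] (μ : Measure α)
    [IsProbabilityMeasure μ] {n : ℕ} (i : Fin (n + 1))
    (G : (Fin (n + 1) → α) → ℝ≥0∞) (hG : Measurable G) :
    ∫⁻ v, G v ∂(Measure.pi fun _ : Fin (n + 1) => μ)
      = ∫⁻ θ, ∫⁻ ts, G (i.insertNth θ ts) ∂(Measure.pi fun _ : Fin n => μ) ∂μ := by
  have hmp := (measurePreserving_piFinSuccAbove (fun _ : Fin (n + 1) => μ) i).symm
      (MeasurableEquiv.piFinSuccAbove (fun _ : Fin (n + 1) => α) i)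
  have h1 : ∫⁻ p : α × (Fin n → α),
      G ((MeasurableEquiv.piFinSuccAbove (fun _ : Fin (n + 1) => α) i).symm p)
        ∂((μ : Measure α).prod (Measure.pi fun _ : Fin n => μ))
      = ∫⁻ v, G v ∂(Measure.pi fun _ : Fin (n + 1) => μ) :=
    hmp.lintegral_comp hG
  rw [← h1, lintegral_prod _ (by
    exact (hG.comp (MeasurableEquiv.piFinSuccAbove
      (fun _ : Fin (n + 1) => α) i).symm.measurable).aemeasurable)]
  rfl

lemma measurable_insertNth' {α β : Type*} [MeasurableSpace α] [MeasurableSpace β] {n : ℕ}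
    (i : Fin (n + 1)) {g : β → α} {gs : β → Fin n → α}
    (hg : Measurable g) (hgs : Measurable gs) :
    Measurable fun b => Fin.insertNth (α := fun _ => α) i (g b) (gs b) := by
  refine measurable_pi_lambda _ fun j => ?_
  refine Fin.succAboveCases (α := fun j => Measurable fun b => Fin.insertNth (α := fun _ => α) i (g b) (gs b) j) i ?_ ?_ j
  · simpa [Fin.insertNth_apply_same] using hg
  · intro j'
    simp only [Fin.insertNth_apply_succAbove]
    exact (measurable_pi_apply j').comp hgs

lemma sum_insertNth {α M : Type*} [AddCommMonoid M] {n : ℕ} (i : Fin (n + 1)) (θ : α)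
    (ts : Fin n → α) (w : α → M) :
    ∑ ℓ, w (Fin.insertNth (α := fun _ => α) i θ ts ℓ) = w θ + ∑ j, w (ts j) := by
  rw [Fin.sum_univ_succAbove _ i]
  simp [Fin.insertNth_apply_same, Fin.insertNth_apply_succAbove]

/-- The Kullback–Leibler divergence `KL(ρ ‖ σ) = ∫ log (dρ/dσ) dρ`. -/
noncomputable def KLdiv {X : Type*} [MeasurableSpace X] (ρ σ : Measure X) : ℝ :=
  ∫ v, Real.log ((ρ.rnDeriv σ) v).toReal ∂ρ

theorem targeted_sPCE_contrastive_gap_KL_repr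
    {Ω ΘT ΘN H : Type*}
    [MeasurableSpace Ω] [MeasurableSpace ΘT] [MeasurableSpace ΘN] [MeasurableSpace H]
    (P : Measure Ω) [IsProbabilityMeasure P]
    (μT : Measure ΘT) [IsProbabilityMeasure μT]
    (ν : Kernel ΘT ΘN) [IsMarkovKernel ν]
    (lam : Measure H) [SigmaFinite lam]
    (f : ΘT × ΘN → H → ℝ)
    (hf_meas : Measurable fun p : (ΘT × ΘN) × H => f p.1 p.2)
    (hf_nonneg : ∀ θ x, 0 ≤ f θ x)
    (hf_dens : ∀ θ, ∫ x, f θ x ∂lam = 1)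
    (L M : ℕ) (hL : 1 ≤ L) (hM : 1 ≤ M)
    (θ0 : Ω → ΘT × ΘN) (h : Ω → H)
    (θs : Ω → Fin L → ΘT × ΘN) (ηs : Ω → Fin M → ΘN)
    (hθ0 : Measurable θ0) (hh : Measurable h) (hθs : Measurable θs) (hηs : Measurable ηs)
    -- the joint law of (θ⁽⁰⁾, h, θ⁽¹⁾,…,θ⁽ᴸ⁾, η⁽¹⁾,…,η⁽ᴹ⁾):
    (hlaw : ∀ φ : (ΘT × ΘN) × H × (Fin L → ΘT × ΘN) × (Fin M → ΘN) → ℝ≥0∞,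
      Measurable φ →
      ∫⁻ ω, φ (θ0 ω, h ω, θs ω, ηs ω) ∂P
        = ∫⁻ θ, (∫⁻ x, ENNReal.ofReal (f θ x) *
            (∫⁻ ts, (∫⁻ es, φ (θ, x, ts, es)
                ∂(Measure.pi fun _ : Fin M => ν θ.1))
              ∂(Measure.pi fun _ : Fin L => μT.compProd ν)) ∂lam)
          ∂(μT.compProd ν))
    -- the target-conditional marginal g and the full marginal m:
    (g : ΘT → H → ℝ) (hg : ∀ θT x, g θT x = ∫ η, f (θT, η) x ∂(ν θT))
    (mf : H → ℝ) (hmf : ∀ x, mf x = ∫ θ, f θ x ∂(μT.compProd ν))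
    -- the estimators p̂_M and p̂_L:
    (pM : Ω → ℝ) (hpM : ∀ ω, pM ω = (M : ℝ)⁻¹ * ∑ i, f ((θ0 ω).1, ηs ω i) (h ω))
    (pL : Ω → ℝ)
    (hpL : ∀ ω, pL ω = ((L : ℝ) + 1)⁻¹ * (f (θ0 ω) (h ω) + ∑ ℓ, f (θs ω ℓ) (h ω)))
    -- almost sure positivity of the likelihoods and marginals:
    (hpos : ∀ᵐ ω ∂P, 0 < f (θ0 ω) (h ω) ∧ (∀ ℓ, 0 < f (θs ω ℓ) (h ω)) ∧
      (∀ i, 0 < f ((θ0 ω).1, ηs ω i) (h ω)) ∧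
      0 < g (θ0 ω).1 (h ω) ∧ 0 < mf (h ω))
    -- the density of p̃ₓ with respect to μ^{⊗(L+1)}:
    (dens : (Fin (L + 1) → ΘT × ΘN) → H → ℝ)
    (hdens : ∀ v x, dens v x = (((L : ℝ) + 1)⁻¹ * ∑ ℓ, f (v ℓ) x) / mf x)
    -- the measure p̃ₓ on Θ^{L+1} with that density:
    (ptilde : H → Measure (Fin (L + 1) → ΘT × ΘN))
    (hptilde : ∀ x, ptilde x
      = (Measure.pi fun _ : Fin (L + 1) => μT.compProd ν).withDensity
          (fun v => ENNReal.ofReal (dens v x)))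
    -- the expectation appearing in the statement is finite:
    (hint_gap : Integrable (fun ω => Real.log (pL ω) - Real.log (mf (h ω))) P) :
    -- KL representation of the contrastive gap, and its nonnegativity
    (∫ ω, (Real.log (pL ω) - Real.log (mf (h ω))) ∂P)
        = ∫ x, KLdiv (ptilde x) (Measure.pi fun _ : Fin (L + 1) => μT.compProd ν) * mf x ∂lam
      ∧ 0 ≤ ∫ ω, (Real.log (pL ω) - Real.log (mf (h ω))) ∂P := by
  classical
  set μc := μT.compProd ν with hμc
  set πL := Measure.pi fun _ : Fin L => μc with hπL
  set π1 := Measure.pi fun _ : Fin (L + 1) => μc with hπ1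
  -- basic measurability and positivity facts
  have hmf_nonneg : ∀ x, 0 ≤ mf x := fun x =>
    (hmf x) ▸ integral_nonneg fun θ => hf_nonneg θ x
  have hmf_meas : Measurable mf := by
    have h1 : mf = fun x => ∫ θ, f θ x ∂μc := funext hmf
    rw [h1]
    exact (hf_meas.stronglyMeasurable.integral_prod_left).measurable
  have hdens_nonneg : ∀ v x, 0 ≤ dens v x := fun v x => by
    rw [hdens]
    exact div_nonneg (mul_nonneg (by positivity)
      (Finset.sum_nonneg fun ℓ _ => hf_nonneg _ _)) (hmf_nonneg x)
  have hdens_meas : Measurable fun q : (Fin (L + 1) → ΘT × ΘN) × H => dens q.1 q.2 := by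
    have h1 : (fun q : (Fin (L + 1) → ΘT × ΘN) × H => dens q.1 q.2)
        = fun q => (((L : ℝ) + 1)⁻¹ * ∑ ℓ, f (q.1 ℓ) q.2) / mf q.2 := funext fun q => hdens _ _
    rw [h1]
    exact (measurable_const.mul (Finset.measurable_sum _ fun ℓ _ =>
      hf_meas.comp (((measurable_pi_apply ℓ).comp measurable_fst).prodMk measurable_snd))).div
      (hmf_meas.comp measurable_snd)
  have hdens_meas_x : ∀ x, Measurable fun v => dens v x := fun x =>
    hdens_meas.comp (measurable_id.prodMk measurable_const)
  have hdens_ins : ∀ (i : Fin (L + 1)) (θ : ΘT × ΘN) (ts : Fin L → ΘT × ΘN) (x : H),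
      dens (i.insertNth θ ts) x
        = (((L : ℝ) + 1)⁻¹ * (f θ x + ∑ j, f (ts j) x)) / mf x := by
    intro i θ ts x
    rw [hdens, sum_insertNth i θ ts (fun θ' => f θ' x)]
  -- the key transfer identity
  have key : ∀ u : ℝ → ℝ≥0∞, Measurable u → u 0 = 0 →
      (∫⁻ ω, u (dens ((0 : Fin (L + 1)).insertNth (θ0 ω) (θs ω)) (h ω)) ∂P)
        = ∫⁻ x, ENNReal.ofReal (mf x) *
            ∫⁻ v, ENNReal.ofReal (dens v x) * u (dens v x) ∂π1 ∂lam := by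
    intro u hu hu0
    have hφm : Measurable fun q : (ΘT × ΘN) × H × (Fin L → ΘT × ΘN) × (Fin M → ΘN) =>
        u (dens ((0 : Fin (L + 1)).insertNth q.1 q.2.2.1) q.2.1) := by
      exact hu.comp (hdens_meas.comp ((measurable_insertNth' _ measurable_fst
        (measurable_fst.comp (measurable_snd.comp measurable_snd))).prodMk
        (measurable_fst.comp measurable_snd)))
    have h1 : (∫⁻ ω, u (dens ((0 : Fin (L + 1)).insertNth (θ0 ω) (θs ω)) (h ω)) ∂P)
        = ∫⁻ θ, (∫⁻ x, ENNReal.ofReal (f θ x) *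
            (∫⁻ ts, (∫⁻ es : Fin M → ΘN, u (dens ((0 : Fin (L + 1)).insertNth θ ts) x)
                ∂(Measure.pi fun _ : Fin M => ν θ.1)) ∂πL) ∂lam) ∂μc :=
      hlaw (fun q => u (dens ((0 : Fin (L + 1)).insertNth q.1 q.2.2.1) q.2.1)) hφm
    have h2 : ∀ (θ : ΘT × ΘN) (x : H) (ts : Fin L → ΘT × ΘN),
        (∫⁻ _es : Fin M → ΘN, u (dens ((0 : Fin (L + 1)).insertNth θ ts) x)
            ∂(Measure.pi fun _ : Fin M => ν θ.1))
          = u (dens ((0 : Fin (L + 1)).insertNth θ ts) x) := by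
      intro θ x ts
      rw [lintegral_const, measure_univ, mul_one]
    have h3 : (∫⁻ θ, (∫⁻ x, ENNReal.ofReal (f θ x) *
            (∫⁻ ts, (∫⁻ es : Fin M → ΘN, u (dens ((0 : Fin (L + 1)).insertNth θ ts) x)
                ∂(Measure.pi fun _ : Fin M => ν θ.1)) ∂πL) ∂lam) ∂μc)
        = ∫⁻ θ, (∫⁻ x, ENNReal.ofReal (f θ x) *
            (∫⁻ ts, u (dens ((0 : Fin (L + 1)).insertNth θ ts) x) ∂πL) ∂lam) ∂μc :=
      lintegral_congr fun θ => lintegral_congr fun x => by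
        rw [lintegral_congr fun ts => h2 θ x ts]
    have hinner_meas : Measurable fun q : (ΘT × ΘN) × H =>
        ENNReal.ofReal (f q.1 q.2)
          * ∫⁻ ts, u (dens ((0 : Fin (L + 1)).insertNth q.1 ts) q.2) ∂πL := by
      refine (ENNReal.measurable_ofReal.comp hf_meas).mul ?_
      refine Measurable.lintegral_prod_right'
        (f := fun q : ((ΘT × ΘN) × H) × (Fin L → ΘT × ΘN) =>
          u (dens ((0 : Fin (L + 1)).insertNth q.1.1 q.2) q.1.2)) ?_
      exact hu.comp (hdens_meas.comp ((measurable_insertNth' _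
        (measurable_fst.comp measurable_fst)
        measurable_snd).prodMk (measurable_snd.comp measurable_fst)))
    have hswap := lintegral_lintegral_swap (μ := μc) (ν := lam)
      (f := fun θ x => ENNReal.ofReal (f θ x)
        * ∫⁻ ts, u (dens ((0 : Fin (L + 1)).insertNth θ ts) x) ∂πL)
      hinner_meas.aemeasurable
    rw [h1, h3, hswap]
    refine lintegral_congr fun x => ?_
    rcases eq_or_lt_of_le (hmf_nonneg x) with hmf0 | hmfpos
    · have hd0 : ∀ v, dens v x = 0 := fun v => by rw [hdens, ← hmf0, div_zero]
      simp [hd0, hu0, ← hmf0]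
    · have hG : ∀ i : Fin (L + 1), Measurable fun v : Fin (L + 1) → ΘT × ΘN =>
          ENNReal.ofReal (f (v i) x) * u (dens v x) := fun i =>
        (ENNReal.measurable_ofReal.comp
          (hf_meas.comp ((measurable_pi_apply i).prodMk
            (measurable_const : Measurable fun _ : Fin (L + 1) → ΘT × ΘN => x)))).mul
          (hu.comp (hdens_meas_x x))
      have hcoord : ∀ i : Fin (L + 1),
          (∫⁻ v, ENNReal.ofReal (f (v i) x) * u (dens v x) ∂π1)
            = ∫⁻ θ, ENNReal.ofReal (f θ x)
                * ∫⁻ ts, u (dens ((0 : Fin (L + 1)).insertNth θ ts) x) ∂πL ∂μc := by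
        intro i
        rw [hπ1, pi_lintegral_insertNth μc i _ (hG i), ← hπL]
        refine lintegral_congr fun θ => ?_
        have hmts : Measurable fun ts : Fin L → ΘT × ΘN =>
            u (dens (Fin.insertNth 0 θ ts) x) :=
          hu.comp ((hdens_meas_x x).comp
            (measurable_insertNth' 0 measurable_const measurable_id))
        rw [← lintegral_const_mul _ hmts]
        refine lintegral_congr fun ts => ?_
        rw [Fin.insertNth_apply_same,
          show dens (i.insertNth θ ts) x = dens ((0 : Fin (L + 1)).insertNth θ ts) x by
            rw [hdens_ins, hdens_ins]]
      have hsum : ∀ v : Fin (L + 1) → ΘT × ΘN,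
          ENNReal.ofReal (mf x) * ENNReal.ofReal (dens v x)
            = ENNReal.ofReal (((L : ℝ) + 1)⁻¹) * ∑ i, ENNReal.ofReal (f (v i) x) := by
        intro v
        rw [← ENNReal.ofReal_mul (hmf_nonneg x), hdens, mul_comm (mf x),
          div_mul_cancel₀ _ (ne_of_gt hmfpos), ENNReal.ofReal_mul (by positivity),
          ENNReal.ofReal_sum_of_nonneg (fun i _ => hf_nonneg _ _)]
      symm
      calc ENNReal.ofReal (mf x) * ∫⁻ v, ENNReal.ofReal (dens v x) * u (dens v x) ∂π1
          = ∫⁻ v, ENNReal.ofReal (mf x)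
              * (ENNReal.ofReal (dens v x) * u (dens v x)) ∂π1 :=
            (lintegral_const_mul _ ((ENNReal.measurable_ofReal.comp
              (hdens_meas_x x)).mul (hu.comp (hdens_meas_x x)))).symm
        _ = ∫⁻ v, ENNReal.ofReal (((L : ℝ) + 1)⁻¹)
              * ∑ i, ENNReal.ofReal (f (v i) x) * u (dens v x) ∂π1 := by
            refine lintegral_congr fun v => ?_
            rw [← mul_assoc, hsum v, mul_assoc, Finset.sum_mul]
        _ = ENNReal.ofReal (((L : ℝ) + 1)⁻¹)
            * ∑ i : Fin (L + 1), ∫⁻ v, ENNReal.ofReal (f (v i) x) * u (dens v x) ∂π1 := by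
            rw [lintegral_const_mul _ (Finset.measurable_sum _ fun i _ => hG i),
              lintegral_finset_sum _ fun i _ => hG i]
        _ = ENNReal.ofReal (((L : ℝ) + 1)⁻¹) * (((L + 1 : ℕ) : ℝ≥0∞)
            * ∫⁻ θ, ENNReal.ofReal (f θ x)
                * ∫⁻ ts, u (dens ((0 : Fin (L + 1)).insertNth θ ts) x) ∂πL ∂μc) := by
            simp only [hcoord]
            rw [Finset.sum_const, Finset.card_univ, Fintype.card_fin, nsmul_eq_mul]
        _ = ∫⁻ θ, ENNReal.ofReal (f θ x)
              * ∫⁻ ts, u (dens ((0 : Fin (L + 1)).insertNth θ ts) x) ∂πL ∂μc := by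
            rw [← mul_assoc]
            have hone : ENNReal.ofReal (((L : ℝ) + 1)⁻¹) * ((L + 1 : ℕ) : ℝ≥0∞) = 1 := by
              rw [ENNReal.ofReal_inv_of_pos (by positivity),
                show ((L : ℝ) + 1) = ((L + 1 : ℕ) : ℝ) by push_cast; ring,
                ENNReal.ofReal_natCast]
              exact ENNReal.inv_mul_cancel (by simp) (by simp)
            rw [hone, one_mul]

  -- rewrite the gap integrand as log of the density along the trajectory
  have hgapae : (fun ω => Real.log (pL ω) - Real.log (mf (h ω))) =ᵐ[P]
      fun ω => Real.log (dens ((0 : Fin (L + 1)).insertNth (θ0 ω) (θs ω)) (h ω)) := by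
    filter_upwards [hpos] with ω hω
    obtain ⟨h0, hs, -, -, hm⟩ := hω
    have hpLpos : 0 < pL ω := by
      rw [hpL]
      have hsum : 0 < f (θ0 ω) (h ω) + ∑ ℓ, f (θs ω ℓ) (h ω) :=
        add_pos_of_pos_of_nonneg h0 (Finset.sum_nonneg fun ℓ _ => hf_nonneg _ _)
      positivity
    rw [hdens_ins, ← hpL ω, Real.log_div (ne_of_gt hpLpos) (ne_of_gt hm)]
  have hFint : Integrable
      (fun ω => Real.log (dens ((0 : Fin (L + 1)).insertNth (θ0 ω) (θs ω)) (h ω))) P :=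
    hint_gap.congr hgapae
  have hLHS0 : (∫ ω, (Real.log (pL ω) - Real.log (mf (h ω))) ∂P)
      = ∫ ω, Real.log (dens ((0 : Fin (L + 1)).insertNth (θ0 ω) (θs ω)) (h ω)) ∂P :=
    integral_congr_ae hgapae
  set Bp : H → ℝ≥0∞ := fun x => ENNReal.ofReal (mf x) *
      ∫⁻ v, ENNReal.ofReal (dens v x) * ENNReal.ofReal (Real.log (dens v x)) ∂π1 with hBp
  set Bn : H → ℝ≥0∞ := fun x => ENNReal.ofReal (mf x) *
      ∫⁻ v, ENNReal.ofReal (dens v x) * ENNReal.ofReal (-Real.log (dens v x)) ∂π1 with hBn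
  have keyp : (∫⁻ ω, ENNReal.ofReal
        (Real.log (dens ((0 : Fin (L + 1)).insertNth (θ0 ω) (θs ω)) (h ω))) ∂P)
      = ∫⁻ x, Bp x ∂lam :=
    key (fun t => ENNReal.ofReal (Real.log t))
      (ENNReal.measurable_ofReal.comp Real.measurable_log) (by simp)
  have keyn : (∫⁻ ω, ENNReal.ofReal
        (-Real.log (dens ((0 : Fin (L + 1)).insertNth (θ0 ω) (θs ω)) (h ω))) ∂P)
      = ∫⁻ x, Bn x ∂lam :=
    key (fun t => ENNReal.ofReal (-Real.log t))
      (ENNReal.measurable_ofReal.comp Real.measurable_log.neg) (by simp)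
  have hBm : ∀ u : ℝ → ℝ≥0∞, Measurable u →
      Measurable fun x => ENNReal.ofReal (mf x) *
        ∫⁻ v, ENNReal.ofReal (dens v x) * u (dens v x) ∂π1 := by
    intro u hu
    refine (ENNReal.measurable_ofReal.comp hmf_meas).mul ?_
    have hjoint : Measurable fun q : H × (Fin (L + 1) → ΘT × ΘN) =>
        ENNReal.ofReal (dens q.2 q.1) * u (dens q.2 q.1) := by
      have hd : Measurable fun q : H × (Fin (L + 1) → ΘT × ΘN) => dens q.2 q.1 :=
        hdens_meas.comp (measurable_snd.prodMk measurable_fst)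
      exact (ENNReal.measurable_ofReal.comp hd).mul (hu.comp hd)
    exact hjoint.lintegral_prod_right'
  have hBpm : Measurable Bp := hBm _ (ENNReal.measurable_ofReal.comp Real.measurable_log)
  have hBnm : Measurable Bn := hBm _ (ENNReal.measurable_ofReal.comp Real.measurable_log.neg)
  have hApfin : (∫⁻ x, Bp x ∂lam) ≠ ⊤ := by
    rw [← keyp]
    refine ne_of_lt (lt_of_le_of_lt (lintegral_mono fun ω => ?_) hFint.2)
    rw [Real.enorm_eq_ofReal_abs]
    exact ENNReal.ofReal_le_ofReal (le_abs_self _)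
  have hAnfin : (∫⁻ x, Bn x ∂lam) ≠ ⊤ := by
    rw [← keyn]
    refine ne_of_lt (lt_of_le_of_lt (lintegral_mono fun ω => ?_) hFint.2)
    rw [Real.enorm_eq_ofReal_abs]
    exact ENNReal.ofReal_le_ofReal (neg_le_abs _)
  have hmain : ∀ᵐ x ∂lam,
      (KLdiv (ptilde x) π1 * mf x = (Bp x).toReal - (Bn x).toReal)
        ∧ 0 ≤ KLdiv (ptilde x) π1 * mf x := by
    filter_upwards [(ae_lt_top hBpm hApfin).and (ae_lt_top hBnm hAnfin)] with x hx
    obtain ⟨hbp, hbn⟩ := hx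
    rcases eq_or_lt_of_le (hmf_nonneg x) with hmf0 | hmfpos
    · have hBp0 : Bp x = 0 := by
        simp only [hBp]
        rw [← hmf0]
        simp
      have hBn0 : Bn x = 0 := by
        simp only [hBn]
        rw [← hmf0]
        simp
      constructor
      · rw [← hmf0, mul_zero, hBp0, hBn0]
        simp
      · rw [← hmf0, mul_zero]
    · set ρ := ptilde x with hρdef
      have hρ : ρ = π1.withDensity fun v => ENNReal.ofReal (dens v x) := hptilde x
      have hmd : Measurable fun v : Fin (L + 1) → ΘT × ΘN => ENNReal.ofReal (dens v x) :=
        ENNReal.measurable_ofReal.comp (hdens_meas_x x)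
      have hlp : Measurable fun v : Fin (L + 1) → ΘT × ΘN =>
          ENNReal.ofReal (Real.log (dens v x)) :=
        ENNReal.measurable_ofReal.comp (Real.measurable_log.comp (hdens_meas_x x))
      have hln : Measurable fun v : Fin (L + 1) → ΘT × ΘN =>
          ENNReal.ofReal (-Real.log (dens v x)) :=
        ENNReal.measurable_ofReal.comp ((Real.measurable_log.comp (hdens_meas_x x)).neg)
      have hCp : (∫⁻ v, ENNReal.ofReal (Real.log (dens v x)) ∂ρ)
          = ∫⁻ v, ENNReal.ofReal (dens v x) * ENNReal.ofReal (Real.log (dens v x)) ∂π1 := by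
        rw [hρ, lintegral_withDensity_eq_lintegral_mul _ hmd hlp]
        rfl
      have hCn : (∫⁻ v, ENNReal.ofReal (-Real.log (dens v x)) ∂ρ)
          = ∫⁻ v, ENNReal.ofReal (dens v x) * ENNReal.ofReal (-Real.log (dens v x)) ∂π1 := by
        rw [hρ, lintegral_withDensity_eq_lintegral_mul _ hmd hln]
        rfl
      have hBpx : Bp x
          = ENNReal.ofReal (mf x) * ∫⁻ v, ENNReal.ofReal (Real.log (dens v x)) ∂ρ := by
        simp only [hBp]
        rw [hCp]
      have hBnx : Bn x
          = ENNReal.ofReal (mf x) * ∫⁻ v, ENNReal.ofReal (-Real.log (dens v x)) ∂ρ := by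
        simp only [hBn]
        rw [hCn]
      have hofmf0 : ENNReal.ofReal (mf x) ≠ 0 := by
        simp [ENNReal.ofReal_eq_zero, not_le, hmfpos]
      have hCpfin : (∫⁻ v, ENNReal.ofReal (Real.log (dens v x)) ∂ρ) ≠ ⊤ := by
        intro htop
        rw [hBpx, htop, ENNReal.mul_top hofmf0] at hbp
        exact lt_irrefl _ hbp
      have hCnfin : (∫⁻ v, ENNReal.ofReal (-Real.log (dens v x)) ∂ρ) ≠ ⊤ := by
        intro htop
        rw [hBnx, htop, ENNReal.mul_top hofmf0] at hbn
        exact lt_irrefl _ hbn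
      have hlogint : Integrable (fun v => Real.log (dens v x)) ρ := by
        refine ⟨(Real.measurable_log.comp (hdens_meas_x x)).aestronglyMeasurable, ?_⟩
        have habs : ∀ v : Fin (L + 1) → ΘT × ΘN, ‖Real.log (dens v x)‖ₑ
            = ENNReal.ofReal (Real.log (dens v x)) + ENNReal.ofReal (-Real.log (dens v x)) := by
          intro v
          rw [Real.enorm_eq_ofReal_abs]
          rcases le_total 0 (Real.log (dens v x)) with hl | hl
          · rw [abs_of_nonneg hl,
              show ENNReal.ofReal (-Real.log (dens v x)) = 0 from
                ENNReal.ofReal_of_nonpos (by linarith), add_zero]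
          · rw [abs_of_nonpos hl, ENNReal.ofReal_of_nonpos hl, zero_add]
        show (∫⁻ v, ‖Real.log (dens v x)‖ₑ ∂ρ) < ⊤
        rw [lintegral_congr habs, lintegral_add_left hlp]
        exact ENNReal.add_lt_top.2 ⟨lt_top_iff_ne_top.2 hCpfin, lt_top_iff_ne_top.2 hCnfin⟩
      have hrn : (fun v => Real.log ((ρ.rnDeriv π1 v)).toReal) =ᵐ[ρ]
          fun v => Real.log (dens v x) := by
        have h1 : ρ.rnDeriv π1 =ᵐ[π1] fun v => ENNReal.ofReal (dens v x) := by
          rw [hρ]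
          exact Measure.rnDeriv_withDensity π1 hmd
        have h2 : ρ ≪ π1 := hρ ▸ withDensity_absolutelyContinuous π1 _
        filter_upwards [h2.ae_le h1] with v hv
        rw [hv, ENNReal.toReal_ofReal (hdens_nonneg v x)]
      have hKL : KLdiv ρ π1 = (∫⁻ v, ENNReal.ofReal (Real.log (dens v x)) ∂ρ).toReal
          - (∫⁻ v, ENNReal.ofReal (-Real.log (dens v x)) ∂ρ).toReal := by
        rw [show KLdiv ρ π1 = ∫ v, Real.log ((ρ.rnDeriv π1 v)).toReal ∂ρ from rfl,
          integral_congr_ae hrn,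
          integral_eq_lintegral_pos_part_sub_lintegral_neg_part hlogint]
      have heq : KLdiv ρ π1 * mf x = (Bp x).toReal - (Bn x).toReal := by
        rw [hKL, hBpx, hBnx, ENNReal.toReal_mul, ENNReal.toReal_mul,
          ENNReal.toReal_ofReal (hmf_nonneg x), sub_mul]
        ring
      refine ⟨heq, ?_⟩
      have hfint : Integrable (fun θ => f θ x) μc := by
        by_contra hni
        rw [hmf x, integral_undef hni] at hmfpos
        exact lt_irrefl _ hmfpos
      have hflin : (∫⁻ θ, ENNReal.ofReal (f θ x) ∂μc) = ENNReal.ofReal (mf x) := by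
        rw [← ofReal_integral_eq_lintegral_ofReal hfint (ae_of_all _ fun θ => hf_nonneg θ x),
          ← hmf x]
      have hGi : ∀ i : Fin (L + 1), Measurable fun v : Fin (L + 1) → ΘT × ΘN =>
          ENNReal.ofReal (f (v i) x) := by
        intro i
        apply Measurable.ennreal_ofReal
        exact hf_meas.comp ((measurable_pi_apply i).prodMk
          (measurable_const : Measurable fun _ : Fin (L + 1) → ΘT × ΘN => x))
      have hcoord1 : ∀ i : Fin (L + 1),
          (∫⁻ v, ENNReal.ofReal (f (v i) x) ∂π1) = ENNReal.ofReal (mf x) := by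
        intro i
        rw [hπ1, pi_lintegral_insertNth μc i _ (hGi i)]
        have hstep : ∀ θ : ΘT × ΘN, (∫⁻ ts : Fin L → ΘT × ΘN,
            ENNReal.ofReal (f (Fin.insertNth (α := fun _ => ΘT × ΘN) i θ ts i) x) ∂(Measure.pi fun _ : Fin L => μc))
              = ENNReal.ofReal (f θ x) := by
          intro θ
          simp only [Fin.insertNth_apply_same]
          rw [lintegral_const, measure_univ, mul_one]
        rw [lintegral_congr hstep, hflin]
      have hone : ENNReal.ofReal (((L : ℝ) + 1)⁻¹) * ((L + 1 : ℕ) : ℝ≥0∞) = 1 := by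
        rw [ENNReal.ofReal_inv_of_pos (by positivity),
          show ((L : ℝ) + 1) = ((L + 1 : ℕ) : ℝ) by push_cast; ring,
          ENNReal.ofReal_natCast]
        exact ENNReal.inv_mul_cancel (by simp) (by simp)
      have hdens1 : (∫⁻ v, ENNReal.ofReal (dens v x) ∂π1) = 1 := by
        have hsum : ∀ v : Fin (L + 1) → ΘT × ΘN,
            ENNReal.ofReal (mf x) * ENNReal.ofReal (dens v x)
              = ENNReal.ofReal (((L : ℝ) + 1)⁻¹) * ∑ i, ENNReal.ofReal (f (v i) x) := by
          intro v
          rw [← ENNReal.ofReal_mul (hmf_nonneg x), hdens, mul_comm (mf x),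
            div_mul_cancel₀ _ (ne_of_gt hmfpos), ENNReal.ofReal_mul (by positivity),
            ENNReal.ofReal_sum_of_nonneg (fun i _ => hf_nonneg _ _)]
        have hstep : ENNReal.ofReal (mf x) * ∫⁻ v, ENNReal.ofReal (dens v x) ∂π1
            = ENNReal.ofReal (mf x) * 1 := by
          rw [← lintegral_const_mul _ hmd]
          calc (∫⁻ v, ENNReal.ofReal (mf x) * ENNReal.ofReal (dens v x) ∂π1)
              = ∫⁻ v, ENNReal.ofReal (((L : ℝ) + 1)⁻¹)
                  * ∑ i, ENNReal.ofReal (f (v i) x) ∂π1 := lintegral_congr hsum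
            _ = ENNReal.ofReal (((L : ℝ) + 1)⁻¹)
                * ∑ i : Fin (L + 1), ∫⁻ v, ENNReal.ofReal (f (v i) x) ∂π1 := by
                rw [lintegral_const_mul _ (Finset.measurable_sum _ fun i _ => hGi i),
                  lintegral_finset_sum _ fun i _ => hGi i]
            _ = ENNReal.ofReal (mf x) * 1 := by
                simp only [hcoord1]
                rw [Finset.sum_const, Finset.card_univ, Fintype.card_fin, nsmul_eq_mul,
                  ← mul_assoc, hone, one_mul, mul_one]
        exact (ENNReal.mul_right_inj hofmf0 ENNReal.ofReal_ne_top).1 hstep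
      haveI hprob : IsProbabilityMeasure ρ := by
        constructor
        rw [hρ, withDensity_apply _ MeasurableSet.univ, setLIntegral_univ, hdens1]
      have hdpos : ∀ᵐ v ∂ρ, 0 < dens v x := by
        rw [hρ, ae_iff]
        have hs : MeasurableSet {v : Fin (L + 1) → ΘT × ΘN | dens v x ≤ 0} :=
          measurableSet_le (hdens_meas_x x) measurable_const
        have hset : {v : Fin (L + 1) → ΘT × ΘN | ¬ 0 < dens v x} = {v | dens v x ≤ 0} := by
          ext v
          simp [not_lt]
        rw [hset, withDensity_apply _ hs,
          setLIntegral_congr_fun hs (fun v hv => ENNReal.ofReal_of_nonpos hv)]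
        simp
      have hinvmeas : Measurable fun v : Fin (L + 1) → ΘT × ΘN => (dens v x)⁻¹ :=
        (hdens_meas_x x).inv
      have hinvlint : (∫⁻ v, ENNReal.ofReal ((dens v x)⁻¹) ∂ρ) ≤ 1 := by
        rw [hρ, lintegral_withDensity_eq_lintegral_mul _ hmd hinvmeas.ennreal_ofReal]
        have hle : ∀ v : Fin (L + 1) → ΘT × ΘN,
            ((fun v => ENNReal.ofReal (dens v x))
              * fun v => ENNReal.ofReal ((dens v x)⁻¹)) v ≤ 1 := by
          intro v
          show ENNReal.ofReal (dens v x) * ENNReal.ofReal ((dens v x)⁻¹) ≤ 1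
          rw [← ENNReal.ofReal_mul (hdens_nonneg v x)]
          rcases eq_or_ne (dens v x) 0 with h0 | h0
          · simp [h0]
          · rw [mul_inv_cancel₀ h0]
            simp
        calc (∫⁻ v, ((fun v => ENNReal.ofReal (dens v x))
              * fun v => ENNReal.ofReal ((dens v x)⁻¹)) v ∂π1)
            ≤ ∫⁻ _v, 1 ∂π1 := lintegral_mono hle
          _ = 1 := by rw [lintegral_one, measure_univ]
      have hinvint : Integrable (fun v => (dens v x)⁻¹) ρ := by
        refine ⟨hinvmeas.aestronglyMeasurable, ?_⟩
        show (∫⁻ v, ‖(dens v x)⁻¹‖ₑ ∂ρ) < ⊤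
        have hnorm : ∀ v : Fin (L + 1) → ΘT × ΘN,
            ‖(dens v x)⁻¹‖ₑ = ENNReal.ofReal ((dens v x)⁻¹) :=
          fun v => Real.enorm_eq_ofReal (inv_nonneg.2 (hdens_nonneg v x))
        rw [lintegral_congr hnorm]
        exact lt_of_le_of_lt hinvlint ENNReal.one_lt_top
      have hinvle : (∫ v, (dens v x)⁻¹ ∂ρ) ≤ 1 := by
        rw [integral_eq_lintegral_of_nonneg_ae
          (ae_of_all _ fun v => inv_nonneg.2 (hdens_nonneg v x)) hinvmeas.aestronglyMeasurable]
        have := ENNReal.toReal_mono ENNReal.one_ne_top hinvlint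
        simpa using this
      have hnn : 0 ≤ ∫ v, Real.log (dens v x) ∂ρ := by
        have honeint : Integrable (fun _v : Fin (L + 1) → ΘT × ΘN => (1 : ℝ)) ρ :=
          integrable_const 1
        have hmono : (∫ v, ((1 : ℝ) - (dens v x)⁻¹) ∂ρ) ≤ ∫ v, Real.log (dens v x) ∂ρ := by
          refine integral_mono_ae (honeint.sub hinvint) hlogint ?_
          filter_upwards [hdpos] with v hv
          have hlog := Real.log_le_sub_one_of_pos (inv_pos.2 hv)
          rw [Real.log_inv] at hlog
          show (1 : ℝ) - (dens v x)⁻¹ ≤ Real.log (dens v x)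
          linarith
        rw [integral_sub honeint hinvint, integral_const] at hmono
        have h1 : ρ.real Set.univ • (1 : ℝ) = 1 := by simp [measure_univ]
        rw [h1] at hmono
        linarith
      have hKL0 : 0 ≤ KLdiv ρ π1 := by
        rw [show KLdiv ρ π1 = ∫ v, Real.log ((ρ.rnDeriv π1 v)).toReal ∂ρ from rfl,
          integral_congr_ae hrn]
        exact hnn
      exact mul_nonneg hKL0 (hmf_nonneg x)
  have hRHS : (∫ x, KLdiv (ptilde x) π1 * mf x ∂lam)
      = (∫⁻ x, Bp x ∂lam).toReal - (∫⁻ x, Bn x ∂lam).toReal := by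
    rw [integral_congr_ae (hmain.mono fun x hx => hx.1),
      integral_sub (integrable_toReal_of_lintegral_ne_top hBpm.aemeasurable hApfin)
        (integrable_toReal_of_lintegral_ne_top hBnm.aemeasurable hAnfin),
      integral_toReal hBpm.aemeasurable (ae_lt_top hBpm hApfin),
      integral_toReal hBnm.aemeasurable (ae_lt_top hBnm hAnfin)]
  have hLHS : (∫ ω, (Real.log (pL ω) - Real.log (mf (h ω))) ∂P)
      = (∫⁻ x, Bp x ∂lam).toReal - (∫⁻ x, Bn x ∂lam).toReal := by
    rw [hLHS0, integral_eq_lintegral_pos_part_sub_lintegral_neg_part hFint, keyp, keyn]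
  constructor
  · rw [hLHS, hRHS]
  · rw [hLHS, ← hRHS]
    exact integral_nonneg_of_ae (hmain.mono fun x hx => hx.2)
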